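/- Let Γ ∈ ℝ^{n×N_g} be the unique solution of F Γ + e_1 f_1ᵀ = Γ G, where F is the n×n companion-type matrix with subdiagonal ones and last column (−α_0,...,−α_{n-1})ᵀ, G is the N_g×N_g companion matrix with superdiagonal ones and last row (−ξ_0,...,−ξ_{N_g−1}), e_1 ∈ ℝ^n is the first standard basis vector, and f_1ᵀ = (1,0,...,0) ∈ ℝ^{1×N_g}, and assume the characteristic polynomials of F and G are coprime. Partition Γ = [Γ_1 Γ_2] with Γ_2 ∈ ℝ^{n×ℓ} consisting of the last ℓ columns, for 1 ≤ ℓ ≤ N_g. Then rank(Γ_2) = min{n, ℓ}. -/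

import Mathlib

set_option maxHeartbeats 1000000

open Matrix Submodule Module

noncomputable section KrylovAux

variable {n : ℕ} (F : Matrix (Fin n) (Fin n) ℝ) (v : Fin n → ℝ)

/-- Krylov subspace spanned by `v, Fv, ..., F^{m-1}v`. -/
def kry (m : ℕ) : Submodule ℝ (Fin n → ℝ) :=
  Submodule.span ℝ ((fun i : ℕ => (F ^ i) *ᵥ v) '' Set.Iio m)

lemma kry_mono {a b : ℕ} (h : a ≤ b) : kry F v a ≤ kry F v b :=
  Submodule.span_mono (Set.image_mono (Set.Iio_subset_Iio h))

lemma mem_kry {i m : ℕ} (h : i < m) : (F ^ i) *ᵥ v ∈ kry F v m :=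
  Submodule.subset_span ⟨i, h, rfl⟩

lemma kry_succ (m : ℕ) :
    kry F v (m + 1) = Submodule.span ℝ {(F ^ m) *ᵥ v} ⊔ kry F v m := by
  unfold kry
  rw [show Set.Iio (m + 1) = insert m (Set.Iio m) by
        ext x; simp only [Set.mem_Iio, Set.mem_insert_iff]; omega,
    Set.image_insert_eq, Submodule.span_insert]

lemma kry_finrank_le (m : ℕ) : finrank ℝ (kry F v m) ≤ m := by
  induction m with
  | zero =>
    have h0 : Set.Iio (0:ℕ) = ∅ := by ext x; simp
    have hb : kry F v 0 = ⊥ := by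
      rw [kry, h0, Set.image_empty, Submodule.span_empty]
    simp [hb]
  | succ m ih =>
    rw [kry_succ]
    refine (Submodule.finrank_add_le_finrank_add_finrank _ _).trans ?_
    have h1 : finrank ℝ (Submodule.span ℝ {(F ^ m) *ᵥ v}) ≤ 1 := by
      classical
      simpa using finrank_span_le_card ({(F ^ m) *ᵥ v} : Set (Fin n → ℝ))
    omega

lemma kry_map {m : ℕ} {x : Fin n → ℝ} (hx : x ∈ kry F v m) :
    F *ᵥ x ∈ kry F v (m + 1) := by
  have hle : kry F v m ≤ (kry F v (m + 1)).comap F.mulVecLin := by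
    rw [kry, Submodule.span_le]
    rintro _ ⟨i, hi, rfl⟩
    simp only [Set.mem_Iio] at hi
    simp only [SetLike.mem_coe, Submodule.mem_comap, mulVecLin_apply]
    have h : F *ᵥ ((F ^ i) *ᵥ v) = (F ^ (i + 1)) *ᵥ v := by
      rw [pow_succ', ← mulVec_mulVec]
    rw [h]
    exact mem_kry F v (by omega)
  simpa using hle hx

lemma kry_stab {a : ℕ} (h : kry F v (a + 1) ≤ kry F v a) (b : ℕ) :
    kry F v b ≤ kry F v a := by
  have key : ∀ i : ℕ, (F ^ i) *ᵥ v ∈ kry F v a := by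
    intro i
    induction i with
    | zero => exact h (mem_kry F v (by omega))
    | succ i ih =>
      have h2 : F *ᵥ ((F ^ i) *ᵥ v) ∈ kry F v (a + 1) := kry_map F v ih
      rw [mulVec_mulVec, ← pow_succ'] at h2
      exact h h2
  rw [kry, Submodule.span_le]
  rintro _ ⟨i, -, rfl⟩
  exact key i

lemma kry_finrank_le_n (m : ℕ) : finrank ℝ (kry F v m) ≤ n := by
  refine (Submodule.finrank_le _).trans ?_
  simp [Module.finrank_fin_fun]

end KrylovAux

/-- any block of trailing columns of the solution Γ of the companion
Sylvester equation FΓ + e₁f₁ᵀ = ΓG has full rank: rank(Γ₂) = min{n,ℓ}. -/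
theorem stmt_15 (n Ng : ℕ) (hn : 1 ≤ n) (hNg : 1 ≤ Ng)
    (α : Fin n → ℝ) (ξ : Fin Ng → ℝ)
    -- F: companion-type matrix with subdiagonal ones and last column -α
    (F : Matrix (Fin n) (Fin n) ℝ)
    (hF : F = Matrix.of fun (i j : Fin n) =>
      if (i : ℕ) = (j : ℕ) + 1 then (1 : ℝ) else if (j : ℕ) = n - 1 then -α i else 0)
    -- G: companion matrix with superdiagonal ones and last row -ξ
    (G : Matrix (Fin Ng) (Fin Ng) ℝ)
    (hG : G = Matrix.of fun (i j : Fin Ng) =>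
      if (j : ℕ) = (i : ℕ) + 1 then (1 : ℝ) else if (i : ℕ) = Ng - 1 then -ξ j else 0)
    (hcop : IsCoprime F.charpoly G.charpoly)
    (Γ : Matrix (Fin n) (Fin Ng) ℝ)
    (hΓ : F * Γ + (Matrix.of fun (i : Fin n) (j : Fin Ng) =>
      if (i : ℕ) = 0 ∧ (j : ℕ) = 0 then (1 : ℝ) else 0) = Γ * G)
    (hΓrank : Γ.rank = min n Ng)
    (ℓ : ℕ) (hℓ1 : 1 ≤ ℓ) (hℓ2 : ℓ ≤ Ng) :
    (Matrix.of fun (i : Fin n) (j : Fin ℓ) =>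
      Γ i ⟨Ng - ℓ + (j : ℕ), by have := j.isLt; omega⟩).rank = min n ℓ := by
  classical
  set last : Fin Ng := ⟨Ng - 1, by omega⟩ with hlast
  set v : Fin n → ℝ := fun i => Γ i last with hv
  -- the column recursion coming from the Sylvester equation
  have hGC : ∀ (i : Fin n) (j : Fin Ng), 1 ≤ (j : ℕ) →
      (Γ * G) i j = Γ i ⟨(j : ℕ) - 1, by omega⟩ + Γ i last * (-ξ j) := by
    intro i j hj
    rw [hG, Matrix.mul_apply]
    have hsplit : ∀ k : Fin Ng,
        Γ i k * (Matrix.of fun (a b : Fin Ng) =>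
          if (b : ℕ) = (a : ℕ) + 1 then (1 : ℝ) else if (a : ℕ) = Ng - 1 then -ξ b else 0) k j
        = (if k = (⟨(j : ℕ) - 1, by omega⟩ : Fin Ng) then Γ i k else 0)
          + (if k = last then Γ i k * (-ξ j) else 0) := by
      intro k
      have hjlt := j.isLt
      have hklt := k.isLt
      simp only [Matrix.of_apply]
      by_cases h1 : (j : ℕ) = (k : ℕ) + 1 <;> by_cases h2 : (k : ℕ) = Ng - 1
      · omega
      · rw [if_pos h1, if_pos (by apply Fin.ext; simp; omega),
          if_neg (by intro hc; apply h2; rw [hc])]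
        ring
      · rw [if_neg h1, if_pos h2, if_neg (by intro hc; apply h1; rw [hc]; simp; omega),
          if_pos (by apply Fin.ext; simpa using h2)]
        ring
      · rw [if_neg h1, if_neg h2, if_neg (by intro hc; apply h1; rw [hc]; simp; omega),
          if_neg (by intro hc; apply h2; rw [hc])]
        ring
    rw [Finset.sum_congr rfl fun k _ => hsplit k, Finset.sum_add_distrib,
      Fintype.sum_ite_eq' (⟨(j : ℕ) - 1, by omega⟩ : Fin Ng) (fun k => Γ i k),
      Fintype.sum_ite_eq' last (fun k => Γ i k * (-ξ j))]
  have hrec : ∀ j : Fin Ng, 1 ≤ (j : ℕ) →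
      (fun i => Γ i ⟨(j : ℕ) - 1, by omega⟩) = F *ᵥ Γᵀ j + ξ j • v := by
    intro j hj
    funext i
    have h := congrFun (congrFun hΓ i) j
    simp only [Matrix.add_apply, Matrix.of_apply] at h
    rw [if_neg (by omega), add_zero] at h
    rw [hGC i j hj] at h
    have hFmul : (F *ᵥ Γᵀ j) i = (F * Γ) i j := by
      simp [Matrix.mulVec, Matrix.mul_apply, dotProduct]
    simp only [Pi.add_apply, Pi.smul_apply, hFmul, hv, smul_eq_mul]
    linarith [h]
  -- columns lie in Krylov spaces
  have hA : ∀ (s : ℕ) (j : Fin Ng), (j : ℕ) = Ng - 1 - s → Γᵀ j ∈ kry F v (s + 1) := by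
    intro s
    induction s with
    | zero =>
      intro j hj
      have hjl : j = last := Fin.ext (by simp only [hlast]; omega)
      have hcol : Γᵀ j = (F ^ 0) *ᵥ v := by
        funext i
        rw [Matrix.transpose_apply, hjl]
        simp [Matrix.one_mulVec, hv]
      rw [hcol]
      exact mem_kry F v (by omega)
    | succ s ih =>
      intro j hj
      by_cases hs : Ng - 1 - s = Ng - 1 - (s + 1)
      · exact kry_mono F v (by omega) (ih j (by omega))
      · have hjlt : (j : ℕ) + 1 < Ng := by omega
        set j' : Fin Ng := ⟨(j : ℕ) + 1, hjlt⟩ with hj'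
        have hj'1 : 1 ≤ (j' : ℕ) := by simp [hj']
        have hcol := hrec j' hj'1
        have hidx : (⟨(j' : ℕ) - 1, by omega⟩ : Fin Ng) = j := Fin.ext (by simp [hj'])
        rw [hidx] at hcol
        have hjfun : Γᵀ j = F *ᵥ Γᵀ j' + ξ j' • v := by
          funext i; exact congrFun hcol i
        rw [hjfun]
        refine Submodule.add_mem _ ?_ (Submodule.smul_mem _ _ ?_)
        · exact kry_map F v (ih j' (by simp [hj']; omega))
        · have h0 := mem_kry F v (show 0 < s + 1 + 1 by omega)
          simpa using h0
  -- span of trailing t columns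
  set S : ℕ → Submodule ℝ (Fin n → ℝ) :=
    fun t => Submodule.span ℝ (Γᵀ '' {j : Fin Ng | Ng - t ≤ (j : ℕ)}) with hS
  have hSmono : ∀ a b : ℕ, a ≤ b → S a ≤ S b := by
    intro a b hab
    exact Submodule.span_mono (Set.image_mono (fun j hj => by
      simp only [Set.mem_setOf_eq] at hj ⊢; omega))
  have hSA : ∀ t, S t ≤ kry F v t := by
    intro t
    rw [hS, Submodule.span_le]
    rintro _ ⟨j, hj, rfl⟩
    simp only [Set.mem_setOf_eq] at hj
    have hjlt := j.isLt
    have h1 : (j : ℕ) = Ng - 1 - (Ng - 1 - (j : ℕ)) := by omega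
    have h2 : (Ng - 1 - (j : ℕ)) + 1 ≤ t := by omega
    exact kry_mono F v h2 (hA (Ng - 1 - (j : ℕ)) j h1)
  have hB : ∀ s : ℕ, s + 1 ≤ Ng → (F ^ s) *ᵥ v ∈ S (s + 1) := by
    intro s
    induction s with
    | zero =>
      intro _
      have : (F ^ 0) *ᵥ v = Γᵀ last := by
        funext i; simp [Matrix.one_mulVec, hv]
      rw [this]
      exact Submodule.subset_span ⟨last, by simp [hlast]; omega, rfl⟩
    | succ s ih =>
      intro hs
      have hmem : (F ^ s) *ᵥ v ∈ S (s + 1) := ih (by omega)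
      have hmap : S (s + 1) ≤ (S (s + 2)).comap F.mulVecLin := by
        rw [hS, Submodule.span_le]
        rintro _ ⟨j, hj, rfl⟩
        simp only [Set.mem_setOf_eq] at hj
        have hj1 : 1 ≤ (j : ℕ) := by omega
        simp only [SetLike.mem_coe, Submodule.mem_comap, mulVecLin_apply]
        have hcol := hrec j hj1
        have hFcol : F *ᵥ Γᵀ j = (fun i => Γ i ⟨(j : ℕ) - 1, by omega⟩) - ξ j • v := by
          rw [hcol]; abel
        rw [hFcol]
        refine Submodule.sub_mem _ ?_ (Submodule.smul_mem _ _ ?_)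
        · have : (fun i => Γ i ⟨(j : ℕ) - 1, by omega⟩)
              = Γᵀ (⟨(j : ℕ) - 1, by omega⟩ : Fin Ng) := by
            funext i; simp
          rw [this]
          exact Submodule.subset_span ⟨_, by simp; omega, rfl⟩
        · have : v = Γᵀ last := by funext i; simp [hv]
          rw [this]
          exact Submodule.subset_span ⟨last, by simp [hlast]; omega, rfl⟩
      have := hmap hmem
      simp only [Submodule.mem_comap, mulVecLin_apply] at this
      rwa [mulVec_mulVec, ← pow_succ'] at this
  have hSW : ∀ t, t ≤ Ng → S t = kry F v t := by
    intro t ht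
    refine le_antisymm (hSA t) ?_
    rw [kry, Submodule.span_le]
    rintro _ ⟨s, hs, rfl⟩
    simp only [Set.mem_Iio] at hs
    exact hSmono (s + 1) t (by omega) (hB s (by omega))
  -- rank of Γ gives the dimension of the full Krylov space
  have hrkNg : finrank ℝ (kry F v Ng) = min n Ng := by
    have hset : Γᵀ '' {j : Fin Ng | Ng - Ng ≤ (j : ℕ)} = Set.range Γᵀ := by
      rw [show {j : Fin Ng | Ng - Ng ≤ (j : ℕ)} = Set.univ from by ext j; simp]
      exact Set.image_univ
    have h2 : Submodule.span ℝ (Set.range Γᵀ) = kry F v Ng := by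
      rw [← hset]; exact hSW Ng le_rfl
    rw [← h2, show Set.range Γᵀ = Set.range Γ.col from rfl, ← Matrix.rank_eq_finrank_span_cols]
    exact hΓrank
  -- the trailing block's columns span exactly S ℓ = kry ℓ
  set Γ₂ : Matrix (Fin n) (Fin ℓ) ℝ := Matrix.of fun (i : Fin n) (j : Fin ℓ) =>
      Γ i ⟨Ng - ℓ + (j : ℕ), by have := j.isLt; omega⟩ with hΓ₂
  have hrange : Set.range Γ₂ᵀ = Γᵀ '' {j : Fin Ng | Ng - ℓ ≤ (j : ℕ)} := by
    ext x
    constructor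
    · rintro ⟨j, rfl⟩
      refine ⟨⟨Ng - ℓ + (j : ℕ), by have := j.isLt; omega⟩, by simp; omega, ?_⟩
      funext i; simp [hΓ₂]
    · rintro ⟨j, hj, rfl⟩
      simp only [Set.mem_setOf_eq] at hj
      have hjlt := j.isLt
      refine ⟨⟨(j : ℕ) - (Ng - ℓ), by omega⟩, ?_⟩
      funext i
      have hidx : (⟨Ng - ℓ + ((j : ℕ) - (Ng - ℓ)), by omega⟩ : Fin Ng) = j :=
        Fin.ext (by simp; omega)
      simp only [Matrix.transpose_apply, hΓ₂, Matrix.of_apply]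
      rw [hidx]
  have hrk2 : Γ₂.rank = finrank ℝ (kry F v ℓ) := by
    have h2 : Submodule.span ℝ (Γᵀ '' {j : Fin Ng | Ng - ℓ ≤ (j : ℕ)}) = kry F v ℓ :=
      hSW ℓ hℓ2
    rw [Matrix.rank_eq_finrank_span_cols, show Set.range Γ₂.col = Set.range Γ₂ᵀ from rfl, hrange, h2]
  rw [hrk2]
  -- final counting argument on Krylov dimensions
  by_cases hstab : ∃ a, a < ℓ ∧ finrank ℝ (kry F v (a + 1)) ≤ finrank ℝ (kry F v a)
  · obtain ⟨a, haℓ, ha⟩ := hstab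
    have heq : kry F v a = kry F v (a + 1) :=
      Submodule.eq_of_le_of_finrank_le (kry_mono F v (by omega)) ha
    have hstab' := kry_stab F v (le_of_eq heq.symm)
    have hℓNg : kry F v ℓ = kry F v Ng := by
      refine le_antisymm (kry_mono F v hℓ2) ?_
      exact (hstab' Ng).trans (kry_mono F v (by omega))
    rw [hℓNg, hrkNg]
    have h1 : finrank ℝ (kry F v Ng) ≤ ℓ := by
      rw [← hℓNg]; exact kry_finrank_le F v ℓ
    rw [hrkNg] at h1
    omega
  · push_neg at hstab
    have hgrow : ∀ m, m ≤ ℓ → m ≤ finrank ℝ (kry F v m) := by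
      intro m
      induction m with
      | zero => intro _; omega
      | succ m ih =>
        intro hm
        have h1 := ih (by omega)
        have h2 := hstab m (by omega)
        omega
    have h1 := hgrow ℓ le_rfl
    have h2 := kry_finrank_le F v ℓ
    have h3 := kry_finrank_le_n F v ℓ
    omega
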